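/- Let w be a clique weighting such that the rescaled weights t_w(r) := (2(r−1)/r)·w(r) satisfy t_w(r) ≤ 1 for all r ≥ 2 (with equality for some r). Then for every n-vertex graph G, w(G) ≤ 1/2, where each edge e is given weight w(r_e) for r_e the order of a largest clique containing e. -/

import Mathlib

open Finset
open scoped Classical

/-- The order of a largest clique of `G` containing both `u` and `v`. -/
noncomputable def cliqueOrder {V : Type} [Fintype V] (G : SimpleGraph V) (u v : V) : ℕ :=
  sSup {r : ℕ | ∃ s : Finset V, G.IsNClique r s ∧ u ∈ s ∧ v ∈ s}


/-- `w(G) = (2/n²)·∑_{e ∈ E(G)} w(r_e)`, written as a sum over ordered pairs of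
adjacent vertices (each edge is counted twice), divided by `n²`. -/
noncomputable def cliqueWeight {V : Type} [Fintype V] (G : SimpleGraph V) (w : ℕ → ℝ) : ℝ :=
  ((Fintype.card V : ℝ) ^ 2)⁻¹ *
    ∑ u : V, ∑ v : V, if G.Adj u v then w (cliqueOrder G u v) else 0

/-- The rescaling `t_w(r) = (2(r-1)/r)·w(r)` of a clique weighting `w`. -/
noncomputable def rescaledWeight (w : ℕ → ℝ) (r : ℕ) : ℝ :=
  2 * ((r : ℝ) - 1) / (r : ℝ) * w r

noncomputable def FF (r : ℕ) : ℝ := r / (2*((r:ℝ)-1))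

lemma FF_nonneg {r : ℕ} (h : 2 ≤ r) : 0 ≤ FF r := by
  have : (2:ℝ) ≤ r := by exact_mod_cast h
  unfold FF
  apply div_nonneg <;> linarith

lemma FF_anti {r t : ℕ} (h : 2 ≤ r) (hrt : r ≤ t) : FF t ≤ FF r := by
  have hr : (2:ℝ) ≤ r := by exact_mod_cast h
  have ht : (r:ℝ) ≤ t := by exact_mod_cast hrt
  unfold FF
  rw [div_le_div_iff₀ (by linarith) (by linarith)]
  nlinarith

lemma cliqueOrder_bdd {V : Type} [Fintype V] (G : SimpleGraph V) (u v : V) :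
    BddAbove {r : ℕ | ∃ s : Finset V, G.IsNClique r s ∧ u ∈ s ∧ v ∈ s} := by
  refine ⟨Fintype.card V, fun r hr => ?_⟩
  obtain ⟨s, hs, -, -⟩ := hr
  rw [← hs.card_eq, ← Finset.card_univ]
  exact Finset.card_le_univ s

lemma le_cliqueOrder {V : Type} [Fintype V] {G : SimpleGraph V} {u v : V} {r : ℕ}
    {s : Finset V} (hs : G.IsNClique r s) (hu : u ∈ s) (hv : v ∈ s) :
    r ≤ cliqueOrder G u v :=
  le_csSup (cliqueOrder_bdd G u v) ⟨s, hs, hu, hv⟩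

lemma pair_clique {V : Type} {G : SimpleGraph V} {u v : V} (h : G.Adj u v) :
    G.IsNClique 2 {u, v} := by
  classical
  have h1 : G.IsNClique 1 {v} := by simp
  simpa using h1.insert (by simp [h])

lemma cliqueOrder_witness {V : Type} [Fintype V] {G : SimpleGraph V} {u v : V}
    (h : G.Adj u v) :
    ∃ s : Finset V, G.IsNClique (cliqueOrder G u v) s ∧ u ∈ s ∧ v ∈ s := by
  have h2 : 2 ∈ {r : ℕ | ∃ s : Finset V, G.IsNClique r s ∧ u ∈ s ∧ v ∈ s} :=
    ⟨{u, v}, pair_clique h, by simp, by simp⟩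
  exact Nat.sSup_mem ⟨2, h2⟩ (cliqueOrder_bdd G u v)

lemma two_le_cliqueOrder {V : Type} [Fintype V] {G : SimpleGraph V} {u v : V}
    (h : G.Adj u v) : 2 ≤ cliqueOrder G u v := by
  have h2 : 2 ∈ {r : ℕ | ∃ s : Finset V, G.IsNClique r s ∧ u ∈ s ∧ v ∈ s} :=
    ⟨{u, v}, pair_clique h, by simp, by simp⟩
  exact le_csSup (cliqueOrder_bdd G u v) h2

lemma cliqueOrder_comm {V : Type} [Fintype V] (G : SimpleGraph V) (u v : V) :
    cliqueOrder G u v = cliqueOrder G v u := by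
  unfold cliqueOrder
  congr 1
  ext r
  exact ⟨fun ⟨s, h1, h2, h3⟩ => ⟨s, h1, h3, h2⟩, fun ⟨s, h1, h2, h3⟩ => ⟨s, h1, h3, h2⟩⟩

lemma key_sum_le : ∀ (N : ℕ) (V : Type) [Fintype V] (G : SimpleGraph V),
    Fintype.card V = N →
    ∑ u : V, ∑ v : V, (if G.Adj u v then FF (cliqueOrder G u v) else 0) ≤ (N:ℝ)^2 / 2 := by
  intro N
  induction N using Nat.strong_induction_on with
  | _ N ih =>
  intro V _ G hcard
  set g : V → V → ℝ := fun u v => if G.Adj u v then FF (cliqueOrder G u v) else 0 with hg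
  have gnonneg : ∀ u v, 0 ≤ g u v := by
    intro u v
    simp only [hg]
    split
    · exact FF_nonneg (two_le_cliqueOrder (by assumption))
    · exact le_refl 0
  have gsymm : ∀ u v, g u v = g v u := by
    intro u v
    simp only [hg]
    by_cases h : G.Adj u v
    · rw [if_pos h, if_pos h.symm, cliqueOrder_comm]
    · rw [if_neg h, if_neg fun h' => h h'.symm]
  -- maximum clique
  set M : Set ℕ := {r : ℕ | ∃ s : Finset V, G.IsNClique r s} with hM
  have bddM : BddAbove M := by
    refine ⟨Fintype.card V, fun r hr => ?_⟩
    obtain ⟨s, hs⟩ := hr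
    rw [← hs.card_eq, ← Finset.card_univ]
    exact Finset.card_le_univ s
  have hM0 : (0:ℕ) ∈ M := ⟨∅, by simp⟩
  set q : ℕ := sSup M with hq'
  obtain ⟨s, hs⟩ : ∃ s : Finset V, G.IsNClique q s := Nat.sSup_mem ⟨0, hM0⟩ bddM
  have hmax : ∀ (r : ℕ) (t : Finset V), G.IsNClique r t → r ≤ q :=
    fun r t ht => le_csSup bddM ⟨t, ht⟩
  by_cases hq2 : 2 ≤ q
  case neg =>
    -- no edges at all
    have hnoadj : ∀ u v : V, ¬ G.Adj u v := by
      intro u v h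
      exact hq2 (hmax 2 {u, v} (pair_clique h))
    have : ∀ u v : V, g u v = 0 := by
      intro u v; simp [hg, hnoadj u v]
    rw [show (∑ u : V, ∑ v : V, g u v) = 0 from
      Finset.sum_eq_zero fun u _ => Finset.sum_eq_zero fun v _ => this u v]
    positivity
  case pos =>
  have hsq : s.card = q := hs.card_eq
  have hqN : q ≤ N := by
    rw [← hcard, ← Finset.card_univ, ← hsq]; exact Finset.card_le_univ s
  have hq1R : (1:ℝ) ≤ (q:ℝ) - 1 := by
    have : (2:ℝ) ≤ q := by exact_mod_cast hq2
    linarith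
  -- split the sum
  have hsplit : ∑ u : V, ∑ v : V, g u v
      = ((∑ u ∈ s, ∑ v ∈ s, g u v) + (∑ u ∈ s, ∑ v ∈ sᶜ, g u v))
      + ((∑ u ∈ sᶜ, ∑ v ∈ s, g u v) + (∑ u ∈ sᶜ, ∑ v ∈ sᶜ, g u v)) := by
    have h1 : ∀ u : V, ∑ v : V, g u v = ∑ v ∈ s, g u v + ∑ v ∈ sᶜ, g u v :=
      fun u => (Finset.sum_add_sum_compl s _).symm
    rw [← Finset.sum_add_sum_compl s (fun u => ∑ v : V, g u v)]
    simp_rw [h1, Finset.sum_add_distrib]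
  -- A : inside the clique
  have hA : ∑ u ∈ s, ∑ v ∈ s, g u v ≤ (q:ℝ)^2 / 2 := by
    have hinner : ∀ u ∈ s, ∑ v ∈ s, g u v ≤ ((q:ℝ) - 1) * FF q := by
      intro u hu
      have hterm : ∀ v ∈ s, g u v ≤ FF q - (if v = u then FF q else 0) := by
        intro v hv
        by_cases hvu : v = u
        · subst hvu
          simp [hg, fun h => G.irrefl h]
        · have hadj : G.Adj u v := hs.isClique hu hv (Ne.symm hvu)
          have hle : q ≤ cliqueOrder G u v := le_cliqueOrder hs hu hv
          simp only [hg, if_pos hadj, if_neg hvu, sub_zero]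
          exact FF_anti hq2 hle
      calc ∑ v ∈ s, g u v ≤ ∑ v ∈ s, (FF q - (if v = u then FF q else 0)) :=
            Finset.sum_le_sum hterm
        _ = (q:ℝ) * FF q - FF q := by
            rw [Finset.sum_sub_distrib, Finset.sum_const, Finset.sum_ite_eq' s u fun _ => FF q,
              if_pos hu, hsq, nsmul_eq_mul]
        _ = ((q:ℝ) - 1) * FF q := by ring
    calc ∑ u ∈ s, ∑ v ∈ s, g u v ≤ ∑ _u ∈ s, ((q:ℝ) - 1) * FF q := Finset.sum_le_sum hinner
      _ = (q:ℝ) * (((q:ℝ) - 1) * FF q) := by rw [Finset.sum_const, hsq, nsmul_eq_mul]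
      _ = (q:ℝ)^2 / 2 := by
          unfold FF
          field_simp
  -- cross rows
  have hrow : ∀ u ∈ sᶜ, ∑ v ∈ s, g u v ≤ (q:ℝ) / 2 := by
    intro u hu
    have hus : u ∉ s := Finset.mem_compl.mp hu
    set Nb : Finset V := s.filter (fun v => G.Adj u v) with hNb
    set d : ℕ := Nb.card with hd
    have hsum : ∑ v ∈ s, g u v = ∑ v ∈ Nb, FF (cliqueOrder G u v) := by
      rw [hNb, Finset.sum_filter]
    have hdq : d + 1 ≤ q := by
      have hdle : d ≤ q := by rw [hd, ← hsq]; exact Finset.card_filter_le _ _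
      rcases lt_or_eq_of_le hdle with h | h
      · omega
      · exfalso
        have hNbs : Nb = s := Finset.eq_of_subset_of_card_le (Finset.filter_subset _ _)
          (by rw [hsq, ← h])
        have : G.IsNClique (q + 1) (insert u s) :=
          hs.insert fun b hb => (Finset.mem_filter.mp (hNbs ▸ hb)).2
        exact absurd (hmax _ _ this) (by omega)
    rcases Nat.eq_zero_or_pos d with hd0 | hd1
    · have hNbe : Nb = ∅ := Finset.card_eq_zero.mp (by omega)
      rw [hsum, hNbe, Finset.sum_empty]
      positivity
    · have hclq : G.IsNClique (d + 1) (insert u Nb) := by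
        refine SimpleGraph.IsNClique.insert ⟨?_, rfl⟩ fun b hb => (Finset.mem_filter.mp hb).2
        exact hs.isClique.subset (by exact_mod_cast Finset.filter_subset _ _)
      have hterm : ∀ v ∈ Nb, FF (cliqueOrder G u v) ≤ FF (d + 1) := by
        intro v hv
        refine FF_anti (by omega) (le_cliqueOrder hclq (Finset.mem_insert_self _ _)
          (Finset.mem_insert_of_mem hv))
      calc ∑ v ∈ s, g u v = ∑ v ∈ Nb, FF (cliqueOrder G u v) := hsum
        _ ≤ ∑ _v ∈ Nb, FF (d + 1) := Finset.sum_le_sum hterm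
        _ = (d:ℝ) * FF (d + 1) := by rw [Finset.sum_const, nsmul_eq_mul]
        _ = ((d:ℝ) + 1) / 2 := by
            unfold FF
            have h1 : (1:ℝ) ≤ (d:ℝ) := by exact_mod_cast hd1
            push_cast
            field_simp
            ring
            exact mul_inv_cancel₀ (ne_of_gt (by linarith))
        _ ≤ (q:ℝ) / 2 := by
            have : ((d:ℝ) + 1) ≤ q := by exact_mod_cast hdq
            linarith
  have hcompl_card : (sᶜ : Finset V).card = N - q := by
    rw [Finset.card_compl, hsq, hcard]
  have hB2 : ∑ u ∈ sᶜ, ∑ v ∈ s, g u v ≤ ((N:ℝ) - q) * ((q:ℝ) / 2) := by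
    calc ∑ u ∈ sᶜ, ∑ v ∈ s, g u v ≤ ∑ _u ∈ sᶜ, (q:ℝ)/2 := Finset.sum_le_sum hrow
      _ = ((N - q : ℕ) : ℝ) * ((q:ℝ)/2) := by rw [Finset.sum_const, hcompl_card, nsmul_eq_mul]
      _ = ((N:ℝ) - q) * ((q:ℝ)/2) := by rw [Nat.cast_sub hqN]
  have hB1 : ∑ u ∈ s, ∑ v ∈ sᶜ, g u v ≤ ((N:ℝ) - q) * ((q:ℝ) / 2) := by
    rw [Finset.sum_comm]
    calc ∑ v ∈ sᶜ, ∑ u ∈ s, g u v = ∑ v ∈ sᶜ, ∑ u ∈ s, g v u := by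
          simp_rw [gsymm]
      _ ≤ ((N:ℝ) - q) * ((q:ℝ)/2) := by
          calc ∑ v ∈ sᶜ, ∑ u ∈ s, g v u ≤ ∑ _v ∈ sᶜ, (q:ℝ)/2 := Finset.sum_le_sum hrow
            _ = ((N - q : ℕ) : ℝ) * ((q:ℝ)/2) := by
                rw [Finset.sum_const, hcompl_card, nsmul_eq_mul]
            _ = ((N:ℝ) - q) * ((q:ℝ)/2) := by rw [Nat.cast_sub hqN]
  -- C : induced subgraph on the complement
  have hC : ∑ u ∈ sᶜ, ∑ v ∈ sᶜ, g u v ≤ ((N:ℝ) - q)^2 / 2 := by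
    set V' := {x : V // x ∈ (sᶜ : Finset V)} with hV'
    set G' : SimpleGraph V' := G.comap (Subtype.val) with hG'
    have hcard' : Fintype.card V' = N - q := by
      rw [← hcompl_card]
      exact Fintype.card_coe _
    have hmono : ∀ (a b : V'), G'.Adj a b →
        cliqueOrder G' a b ≤ cliqueOrder G (a:V) (b:V) := by
      intro a b hab
      obtain ⟨t, ht, hat, hbt⟩ := cliqueOrder_witness hab
      have hemb : G.IsNClique (cliqueOrder G' a b)
          (t.map (Function.Embedding.subtype _)) := by
        constructor
        · intro x hx y hy hne
          rw [Finset.coe_map] at hx hy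
          obtain ⟨x', hx', rfl⟩ := hx
          obtain ⟨y', hy', rfl⟩ := hy
          have : G'.Adj x' y' := ht.isClique hx' hy' (by
            intro h; exact hne (by rw [h]))
          exact this
        · rw [Finset.card_map, ht.card_eq]
      exact le_cliqueOrder hemb
        (Finset.mem_map_of_mem _ hat) (Finset.mem_map_of_mem _ hbt)
    have hterm : ∀ (a b : V'),
        g (a:V) (b:V) ≤ (if G'.Adj a b then FF (cliqueOrder G' a b) else 0) := by
      intro a b
      by_cases hab : G'.Adj a b
      · have hab' : G.Adj (a:V) (b:V) := hab
        rw [if_pos hab]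
        simp only [hg, if_pos hab']
        exact FF_anti (two_le_cliqueOrder hab) (hmono a b hab)
      · have hab' : ¬ G.Adj (a:V) (b:V) := hab
        simp [hg, hab, hab']
    have hrewrite : ∑ u ∈ sᶜ, ∑ v ∈ sᶜ, g u v = ∑ a : V', ∑ b : V', g (a:V) (b:V) := by
      rw [← Finset.sum_coe_sort (sᶜ : Finset V) (fun u => ∑ v ∈ sᶜ, g u v)]
      exact Finset.sum_congr rfl fun a _ =>
        (Finset.sum_coe_sort (sᶜ : Finset V) (fun v => g (a:V) v)).symm
    have hNq : N - q < N := by omega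
    calc ∑ u ∈ sᶜ, ∑ v ∈ sᶜ, g u v
        = ∑ a : V', ∑ b : V', g (a:V) (b:V) := hrewrite
      _ ≤ ∑ a : V', ∑ b : V', (if G'.Adj a b then FF (cliqueOrder G' a b) else 0) :=
          Finset.sum_le_sum fun a _ => Finset.sum_le_sum fun b _ => hterm a b
      _ ≤ ((N - q : ℕ):ℝ)^2 / 2 := ih (N - q) hNq V' G' hcard'
      _ = ((N:ℝ) - q)^2 / 2 := by rw [Nat.cast_sub hqN]
  -- put everything together
  rw [hsplit]
  have hqNR : (q:ℝ) ≤ N := by exact_mod_cast hqN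
  nlinarith [hA, hB1, hB2, hC]

/-- If `w` is a clique weighting whose rescaled weights satisfy `t_w(r) ≤ 1` for all
`r ≥ 2`, with equality for some `r`, then `w(G) ≤ 1/2` for every graph `G`. -/
theorem cliqueWeight_le_half_of_rescaled_le_one (w : ℕ → ℝ)
    (hw : ∀ r, 2 ≤ r → 0 ≤ w r ∧ w r ≤ 1)
    (hle : ∀ r, 2 ≤ r → rescaledWeight w r ≤ 1)
    (heq : ∃ r, 2 ≤ r ∧ rescaledWeight w r = 1)
    (n : ℕ) (G : SimpleGraph (Fin n)) :
    cliqueWeight G w ≤ 1 / 2 := by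
  have hWF : ∀ r, 2 ≤ r → w r ≤ FF r := by
    intro r hr
    have hr2 : (2:ℝ) ≤ (r:ℝ) := by exact_mod_cast hr
    have h := hle r hr
    unfold rescaledWeight at h
    rw [div_mul_eq_mul_div, div_le_one (by linarith)] at h
    unfold FF
    rw [le_div_iff₀ (by linarith)]
    linarith
  unfold cliqueWeight
  rcases Nat.eq_zero_or_pos n with hn0 | hn1
  · subst hn0
    simp
  · have hsum1 : ∑ u : Fin n, ∑ v : Fin n, (if G.Adj u v then w (cliqueOrder G u v) else 0)
        ≤ ∑ u : Fin n, ∑ v : Fin n, (if G.Adj u v then FF (cliqueOrder G u v) else 0) := by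
      refine Finset.sum_le_sum fun u _ => Finset.sum_le_sum fun v _ => ?_
      by_cases hadj : G.Adj u v
      · rw [if_pos hadj, if_pos hadj]
        exact hWF _ (two_le_cliqueOrder hadj)
      · rw [if_neg hadj, if_neg hadj]
    have hsum2 := key_sum_le n (Fin n) G (by simp)
    have hcard : (Fintype.card (Fin n) : ℝ) = (n:ℝ) := by simp
    rw [hcard]
    have hnpos : (0:ℝ) < (n:ℝ)^2 := by positivity
    calc ((n:ℝ)^2)⁻¹ * ∑ u : Fin n, ∑ v : Fin n, (if G.Adj u v then w (cliqueOrder G u v) else 0)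
        ≤ ((n:ℝ)^2)⁻¹ * ((n:ℝ)^2 / 2) := by
          apply mul_le_mul_of_nonneg_left (le_trans hsum1 hsum2) (by positivity)
      _ = 1 / 2 := by field_simp
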